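/- Let H be a finite-dimensional complex space, Act a finite set, (U_α)_{α∈Act} unitaries, and V_1,…,V_m subspaces with F = V_1 ∪ ⋯ ∪ V_m. Suppose Y_1,…,Y_q are subspaces of H such that (1) for every i and α ∈ Act there exists j with U_α Y_i = Y_j, and (2) every simple loop Y_{r_0} → Y_{r_1} → ⋯ → Y_{r_{k−1}} → Y_{r_0} under the action of the unitaries (with the Y_{r_i} pairwise distinct) contains some Y_{r_i} ⊆ V_j for some j. Then every state ψ_0 ∈ Y_1 ∪ ⋯ ∪ Y_q satisfies: for every infinite action sequence α_0 α_1 ⋯ ∈ Act^ω, the orbit ψ_{n+1} = U_{α_n} ψ_n enters F infinitely often. -/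

import Mathlib

/-- If the subspaces Y_1,…,Y_q are permuted among themselves by the unitaries and every
simple loop of the induced graph passes through a subspace contained in some V_j, then
from every state in ⋃ Y_i, every infinite action sequence enters F = ⋃ V_j infinitely
often. -/
theorem stmt_15 {H : Type*} [NormedAddCommGroup H] [InnerProductSpace ℂ H]
    [FiniteDimensional ℂ H] {Act : Type*} [Fintype Act]
    (U : Act → (H →ₗ[ℂ] H)) (hU : ∀ α, U α ∈ unitary (H →ₗ[ℂ] H))
    (q m : ℕ) (Y : Fin q → Submodule ℂ H) (V : Fin m → Submodule ℂ H)
    (hclosed : ∀ (i : Fin q) (α : Act), ∃ j : Fin q, Submodule.map (U α) (Y i) = Y j)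
    (hloop : ∀ (k : ℕ), 0 < k → ∀ (r : ℕ → Fin q) (β : ℕ → Act),
      (∀ i < k, Submodule.map (U (β i)) (Y (r i)) = Y (r ((i + 1) % k))) →
      (∀ i < k, ∀ j < k, r i = r j → i = j) →
      ∃ i < k, ∃ t : Fin m, Y (r i) ≤ V t) :
    ∀ ψ₀ : H, (∃ i : Fin q, ψ₀ ∈ Y i) →
      ∀ w : ℕ → Act, ∀ N : ℕ, ∃ n ≥ N, ∃ t : Fin m,
        (((List.range n).map w).foldl (fun v α => U α v) ψ₀) ∈ V t := by
  classical
  intro ψ₀ hψ₀ w N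
  obtain ⟨i0, hi0⟩ := hψ₀
  set ψ : ℕ → H := fun n => (((List.range n).map w).foldl (fun v α => U α v) ψ₀) with hψ
  have hψsucc : ∀ n, ψ (n + 1) = U (w n) (ψ n) := by
    intro n
    simp [hψ, List.range_succ]
  -- the induced walk in the graph of subspaces
  let r : ℕ → Fin q := fun n => Nat.rec i0 (fun n rn => (hclosed rn (w n)).choose) n
  have hrmap : ∀ n, Submodule.map (U (w n)) (Y (r n)) = Y (r (n + 1)) := fun n =>
    (hclosed (r n) (w n)).choose_spec
  have hmem : ∀ n, ψ n ∈ Y (r n) := by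
    intro n
    induction n with
    | zero => exact hi0
    | succ n ih =>
      rw [hψsucc, ← hrmap]
      exact ⟨ψ n, ih, rfl⟩
  -- pigeonhole: a repeat occurs after N
  have hex : ∃ b, N < b ∧ ∃ a, N ≤ a ∧ a < b ∧ r a = r b := by
    have hni : ¬ Function.Injective (fun i : Fin (q + 1) => r (N + i)) := by
      intro hinj
      have := Fintype.card_le_of_injective _ hinj
      simp at this
    rw [Function.not_injective_iff] at hni
    obtain ⟨i, j, hij, hne⟩ := hni
    rcases lt_or_gt_of_ne hne with h | h
    · have h' : (i : ℕ) < j := h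
      exact ⟨N + j, by omega, N + i, by omega, by omega, hij⟩
    · have h' : (j : ℕ) < i := h
      exact ⟨N + i, by omega, N + j, by omega, by omega, hij.symm⟩
  -- take the first repeat: this yields a simple loop
  haveI : DecidablePred (fun b => N < b ∧ ∃ a, N ≤ a ∧ a < b ∧ r a = r b) :=
    fun _ => Classical.propDecidable _
  obtain ⟨hNb, a, hNa, hab, hrab⟩ := Nat.find_spec hex
  set b := Nat.find hex with hb
  have hinj : ∀ i j, N ≤ i → N ≤ j → i < b → j < b → r i = r j → i = j := by
    intro i j hNi hNj hib hjb hr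
    by_contra hne
    rcases Nat.lt_or_ge i j with h | h
    · exact Nat.find_min hex hjb ⟨by omega, i, hNi, h, hr⟩
    · have h' : j < i := by omega
      exact Nat.find_min hex hib ⟨by omega, j, hNj, h', hr.symm⟩
  set k := b - a with hk
  have hk0 : 0 < k := by omega
  have hmain := hloop k hk0 (fun i => r (a + i)) (fun i => w (a + i)) ?map ?inj
  case map =>
    intro i hi
    rcases Nat.lt_or_ge (i + 1) k with h | h
    · rw [Nat.mod_eq_of_lt h, show a + (i + 1) = a + i + 1 by omega]
      exact hrmap (a + i)
    · have hik : i + 1 = k := by omega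
      rw [show (i + 1) % k = 0 by rw [hik]; simp, show a + 0 = a from rfl, hrab,
        show b = a + i + 1 by omega]
      exact hrmap (a + i)
  case inj =>
    intro i hik j hjk hr
    have := hinj (a + i) (a + j) (by omega) (by omega) (by omega) (by omega) hr
    omega
  obtain ⟨i, hik, t, ht⟩ := hmain
  exact ⟨a + i, by omega, t, ht (hmem (a + i))⟩
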